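/- Let G be an embedded graph and k a natural number. Then, as an identity of rational functions in a variable b, k^{c(G)} · b^{r(G)} · R(G; (k+b)/b, bk, 1/k) = Σ_{φ ∈ R(G_m,k)} (b+1)^{total(φ)} · b^{white(φ)}, where the sum is over all R-permissible k-valuations of the canonically checkerboard coloured medial graph G_m. -/

import Mathlib

/-!
A flag (graph-encoded map) model of ribbon graphs / cellularly embedded graphs,
together with the graph polynomials studied by Ellis-Monaghan and Moffatt in
"Evaluations of topological Tutte polynomials".

An embedded graph is encoded by its set of edges `E`, a number of isolated
vertices, and a fixed-point-free involution `t1` on the set of flags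
`E × Bool × Bool` (each edge carries four flags; the fixed involutions
`t0 : (e,a,b) ↦ (e,!a,b)` and `t2 : (e,a,b) ↦ (e,a,!b)` cross the edge,
resp. move to the other side of the edge, while `t1` encodes the rotation
structure at the vertices).  Vertices are the orbits of `⟨t1,t2⟩`, faces the
orbits of `⟨t0,t1⟩`, and connected components the orbits of `⟨t0,t1,t2⟩`.
-/

open scoped Classical

noncomputable section

/-- A ribbon graph (equivalently, a cellularly embedded graph) in the flag model. -/
structure RibbonGraph where
  E : Type
  fintypeE : Fintype E
  decE : DecidableEq E
  isolated : ℕ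
  t1 : E × Bool × Bool → E × Bool × Bool
  inv1 : Function.Involutive t1
  fix1 : ∀ x, t1 x ≠ x

attribute [instance] RibbonGraph.fintypeE RibbonGraph.decE

/-- The number of orbits of the group generated by a family of moves encoded by the
relation `r`, computed as the number of connected components of the associated graph. -/
def orbCount {α : Type} (r : α → α → Prop) : ℕ :=
  Nat.card (SimpleGraph.fromRel r).ConnectedComponent

namespace RibbonGraph

variable (G : RibbonGraph)

/-- The flags of an embedded graph: four per edge. -/
abbrev Flag : Type := G.E × Bool × Bool

/-- The involution crossing an edge. -/
def t0 : G.Flag → G.Flag := fun x => (x.1, !x.2.1, x.2.2)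

/-- The involution moving to the other side of an edge. -/
def t2 : G.Flag → G.Flag := fun x => (x.1, x.2.1, !x.2.2)

lemma t0_invol : Function.Involutive G.t0 := by
  intro x; simp [t0]

lemma t2_invol : Function.Involutive G.t2 := by
  intro x; simp [t2]

/-- Two flags are in the same vertex iff they are connected in this graph. -/
def vertexGraph : SimpleGraph G.Flag :=
  SimpleGraph.fromRel fun x y => G.t1 x = y ∨ G.t2 x = y

/-- The number of vertices. -/
def vCount : ℕ :=
  orbCount (fun x y : G.Flag => G.t1 x = y ∨ G.t2 x = y) + G.isolated

/-- The number of edges. -/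
def eCount : ℕ := Fintype.card G.E

/-- The number of connected components of the spanning subgraph `(V, A)`. -/
def cSub (A : Finset G.E) : ℕ :=
  orbCount (fun x y : G.Flag => G.t1 x = y ∨ G.t2 x = y ∨ (x.1 ∈ A ∧ G.t0 x = y)) + G.isolated

/-- The number of connected components. -/
def cCount : ℕ := G.cSub Finset.univ

/-- The number of boundary components (faces) of the spanning ribbon subgraph `(V, A)`. -/
def fSub (A : Finset G.E) : ℕ :=
  orbCount (fun x y : G.Flag => G.t1 x = y ∨ (if x.1 ∈ A then G.t0 x else G.t2 x) = y) +
    G.isolated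

/-- The number of faces (boundary components of the ribbon graph). -/
def fCount : ℕ := G.fSub Finset.univ

/-- The rank `r(G) = v(G) - c(G)`. -/
def rank : ℕ := G.vCount - G.cCount

/-- The rank `r(A)` of the spanning subgraph `(V, A)`. -/
def rankSub (A : Finset G.E) : ℕ := G.vCount - G.cSub A

/-- The nullity `n(A) = |A| - r(A)` of the spanning subgraph `(V, A)`. -/
def nullSub (A : Finset G.E) : ℕ := A.card + G.cSub A - G.vCount

/-- The nullity `n(G) = e(G) - r(G)`. -/
def nullity : ℕ := G.nullSub Finset.univ

/-- The Euler genus `γ(A) = c(A) - f(A) + n(A)` of the spanning ribbon subgraph `(V, A)`. -/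
def genusSub (A : Finset G.E) : ℕ := 2 * G.cSub A + A.card - (G.vCount + G.fSub A)

/-! ### Partial Petrials and partial duals -/

/-- The flag involution realising a half-twist on the edges in `A`. -/
def twist (A : Finset G.E) : G.Flag → G.Flag :=
  fun x => if x.1 ∈ A then (x.1, xor x.2.1 x.2.2, x.2.2) else x

lemma twist_twist (A : Finset G.E) (x : G.Flag) : G.twist A (G.twist A x) = x := by
  by_cases h : x.1 ∈ A <;> simp [twist, h, Bool.xor_assoc]

/-- The partial Petrial `G^{τ(A)}`: give a half-twist to every edge in `A`. -/
def petrial (A : Finset G.E) : RibbonGraph where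
  E := G.E
  fintypeE := G.fintypeE
  decE := G.decE
  isolated := G.isolated
  t1 := fun x => G.twist A (G.t1 (G.twist A x))
  inv1 := by
    intro x
    show G.twist A (G.t1 (G.twist A (G.twist A (G.t1 (G.twist A x))))) = x
    rw [G.twist_twist, G.inv1 (G.twist A x), G.twist_twist]
  fix1 := by
    intro x h
    have h2 := congrArg (G.twist A) h
    rw [G.twist_twist] at h2
    exact G.fix1 _ h2

/-- The flag involution realising partial duality on the edges in `A`. -/
def swapS (A : Finset G.E) : G.Flag → G.Flag :=
  fun x => if x.1 ∈ A then (x.1, x.2.2, x.2.1) else x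

lemma swapS_swapS (A : Finset G.E) (x : G.Flag) : G.swapS A (G.swapS A x) = x := by
  by_cases h : x.1 ∈ A <;> simp [swapS, h]

/-- Chmutov's partial dual `G^{δ(A)}` of `G` with respect to `A ⊆ E(G)`. -/
def pdual (A : Finset G.E) : RibbonGraph where
  E := G.E
  fintypeE := G.fintypeE
  decE := G.decE
  isolated := G.isolated
  t1 := fun x => G.swapS A (G.t1 (G.swapS A x))
  inv1 := by
    intro x
    show G.swapS A (G.t1 (G.swapS A (G.swapS A (G.t1 (G.swapS A x))))) = x
    rw [G.swapS_swapS, G.inv1 (G.swapS A x), G.swapS_swapS]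
  fix1 := by
    intro x h
    have h2 := congrArg (G.swapS A) h
    rw [G.swapS_swapS] at h2
    exact G.fix1 _ h2

/-- The geometric dual `G*`. -/
def dual : RibbonGraph := G.pdual Finset.univ

/-- The Petrie dual `G^×`. -/
def petrialAll : RibbonGraph := G.petrial Finset.univ

/-! ### Graph polynomials -/

/-- The Bollobás–Riordan ribbon graph polynomial
`R(G;x,y,z) = Σ_{A⊆E} (x-1)^{r(G)-r(A)} y^{n(A)} z^{c(A)-f(A)+n(A)}`. -/
def BR {R : Type} [CommRing R] (x y z : R) : R :=
  ∑ A : Finset G.E,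
    (x - 1) ^ (G.rank - G.rankSub A) * y ^ G.nullSub A * z ^ G.genusSub A

/-- The Tutte polynomial `T(G;x,y) = Σ_{A⊆E} (x-1)^{r(G)-r(A)} (y-1)^{n(A)}`. -/
def tutte {R : Type} [CommRing R] (x y : R) : R :=
  ∑ A : Finset G.E, (x - 1) ^ (G.rank - G.rankSub A) * (y - 1) ^ G.nullSub A

/-- The chromatic polynomial of the underlying abstract graph of `G`, via Whitney's
rank expansion `χ(G;λ) = Σ_{A⊆E} (-1)^{|A|} λ^{c(A)}`. -/
def chromatic {R : Type} [CommRing R] (l : R) : R :=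
  ∑ A : Finset G.E, (-1 : R) ^ A.card * l ^ G.cSub A

/-- The Penrose polynomial `P(G;λ) = Σ_{A⊆E} (-1)^{|A|} λ^{f(G^{τ(A)})}`. -/
def penrose {R : Type} [CommRing R] (l : R) : R :=
  ∑ A : Finset G.E, (-1 : R) ^ A.card * l ^ (G.petrial A).fCount

/-- The topological transition polynomial `Q(G;(a,b,c),t)`, as the state sum over the
states of the medial graph `G_m`:  a state chooses at each vertex `v_e` of `G_m` a white
smoothing (`e ∈ A`), a black smoothing (`e ∈ B`) or a crossing (`e ∈ C`), and its number
of closed curves is the number of boundary components of the spanning ribbon subgraph of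
`G^{τ(C)}` on the edge set `A ∪ C`. -/
def transition {R : Type} [CommRing R] (a b c t : R) : R :=
  ∑ C : Finset G.E, ∑ A ∈ (Finset.univ \ C).powerset,
    a ^ A.card * b ^ (G.eCount - A.card - C.card) * c ^ C.card *
      t ^ ((G.petrial C).fSub (A ∪ C))

/-! ### Topological predicates -/

/-- `G` is orientable iff its flags admit a consistent 2-colouring
(the graph-encoded map is bipartite). -/
def Orientable : Prop :=
  ∃ o : G.Flag → Bool,
    (∀ x, o (G.t0 x) = !o x) ∧ (∀ x, o (G.t1 x) = !o x) ∧ (∀ x, o (G.t2 x) = !o x)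

/-- `G` is checkerboard colourable iff its faces can be properly 2-coloured. -/
def CheckerboardColourable : Prop :=
  ∃ c : G.Flag → Bool,
    (∀ x, c (G.t0 x) = c x) ∧ (∀ x, c (G.t1 x) = c x) ∧ (∀ x, c (G.t2 x) = !c x)

/-- `G` is a plane graph: connected with Euler genus `0`. -/
def IsPlane : Prop :=
  G.cCount = 1 ∧ (G.vCount : ℤ) - (G.eCount : ℤ) + (G.fCount : ℤ) = 2

/-- `G` has no loops: no edge has both of its ends on the same vertex. -/
def Loopless : Prop := ∀ x : G.Flag, ¬ G.vertexGraph.Reachable x (G.t0 x)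

/-- `G` contains a loop. -/
def HasLoop : Prop := ∃ x : G.Flag, G.vertexGraph.Reachable x (G.t0 x)

/-- The edge `e` of `G` is not a loop. -/
def NonLoop (e : G.E) : Prop :=
  ¬ G.vertexGraph.Reachable (e, true, true) (e, false, true)

/-- The underlying abstract graph of `G` admits a proper vertex 4-colouring. -/
def FourColourable : Prop :=
  ∃ c : G.Flag → Fin 4,
    (∀ x, c (G.t1 x) = c x) ∧ (∀ x, c (G.t2 x) = c x) ∧ (∀ x, c (G.t0 x) ≠ c x)

/-- `G` is cubic: every vertex has degree `3`, i.e. carries six flags. -/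
def Cubic : Prop :=
  G.isolated = 0 ∧
    ∀ C : G.vertexGraph.ConnectedComponent,
      Nat.card {x : G.Flag // G.vertexGraph.connectedComponentMk x = C} = 6

/-- The number of proper edge 3-colourings of `G`: edges sharing a vertex receive
distinct colours. -/
def EdgeColourings3 : ℕ :=
  Nat.card {c : G.E → Fin 3 //
    ∀ x y : G.Flag, G.vertexGraph.Reachable x y → x.1 ≠ y.1 → c x.1 ≠ c y.1}

/-! ### `k`-valuations of the medial graph

The edges of the medial graph `G_m` correspond to the corners `{x, t1 x}` of `G`,
together with one free loop for each isolated vertex of `G`.  The four medial edges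
incident with the medial vertex `v_e` correspond to the four flags of `e`. -/

section Valuations

variable {k : ℕ}

/-- The colours around `v_e` are paired across the white faces. -/
def WhiteAt (c : G.Flag → Fin k) (e : G.E) : Prop :=
  c (e, true, true) = c (e, false, true) ∧ c (e, true, false) = c (e, false, false)

/-- The colours around `v_e` are paired across the black faces. -/
def BlackAt (c : G.Flag → Fin k) (e : G.E) : Prop :=
  c (e, true, true) = c (e, true, false) ∧ c (e, false, true) = c (e, false, false)

/-- The colours around `v_e` are paired crosswise. -/
def CrossAt (c : G.Flag → Fin k) (e : G.E) : Prop :=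
  c (e, true, true) = c (e, false, false) ∧ c (e, true, false) = c (e, false, true)

/-- All four colours around `v_e` agree. -/
def TotalAt (c : G.Flag → Fin k) (e : G.E) : Prop :=
  c (e, true, true) = c (e, false, true) ∧ c (e, true, true) = c (e, true, false) ∧
    c (e, true, true) = c (e, false, false)

/-- A `k`-valuation of the medial graph `G_m`: an edge `k`-colouring of `G_m` such that
every vertex of `G_m` is incident with an even number of edges of each colour. -/
def IsValuation (c : G.Flag → Fin k) : Prop :=
  (∀ x, c (G.t1 x) = c x) ∧
    ∀ e : G.E, G.WhiteAt c e ∨ G.BlackAt c e ∨ G.CrossAt c e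

/-- The number of vertices of `G_m` of total type in a valuation. -/
def totalCount (c : G.Flag → Fin k) : ℕ :=
  (Finset.univ.filter fun e : G.E => G.TotalAt c e).card

/-- The number of vertices of `G_m` of white type in a valuation. -/
def whiteCount (c : G.Flag → Fin k) : ℕ :=
  (Finset.univ.filter fun e : G.E => G.WhiteAt c e ∧ ¬ G.TotalAt c e).card

/-- The number of vertices of `G_m` of black type in a valuation. -/
def blackCount (c : G.Flag → Fin k) : ℕ :=
  (Finset.univ.filter fun e : G.E => G.BlackAt c e ∧ ¬ G.TotalAt c e).card

/-- The number of vertices of `G_m` of crossing type in a valuation. -/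
def crossCount (c : G.Flag → Fin k) : ℕ :=
  (Finset.univ.filter fun e : G.E => G.CrossAt c e ∧ ¬ G.TotalAt c e).card

/-- The set `K(G_m,k)` of all `k`-valuations of `G_m` (a valuation also colours the
free loop of `G_m` arising from each isolated vertex of `G`). -/
def kvals (k : ℕ) : Finset ((G.Flag → Fin k) × (Fin G.isolated → Fin k)) :=
  Finset.univ.filter fun φ => G.IsValuation φ.1

/-- The set `R(G_m,k)` of `R`-permissible `k`-valuations: every vertex of `G_m` is of
white, black or total type. -/
def kvalsR (k : ℕ) : Finset ((G.Flag → Fin k) × (Fin G.isolated → Fin k)) :=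
  Finset.univ.filter fun φ =>
    G.IsValuation φ.1 ∧ ∀ e : G.E, ¬ (G.CrossAt φ.1 e ∧ ¬ G.TotalAt φ.1 e)

/-- The set `P(G_m,k)` of `P`-permissible `k`-valuations: every vertex of `G_m` is of
white, crossing or total type. -/
def kvalsP (k : ℕ) : Finset ((G.Flag → Fin k) × (Fin G.isolated → Fin k)) :=
  Finset.univ.filter fun φ =>
    G.IsValuation φ.1 ∧ ∀ e : G.E, ¬ (G.BlackAt φ.1 e ∧ ¬ G.TotalAt φ.1 e)

/-- The set `A(G_m,k)` of admissible `k`-valuations: every vertex of `G_m` is of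
white or crossing type. -/
def kvalsA (k : ℕ) : Finset ((G.Flag → Fin k) × (Fin G.isolated → Fin k)) :=
  Finset.univ.filter fun φ =>
    G.IsValuation φ.1 ∧
      ∀ e : G.E, ¬ G.TotalAt φ.1 e ∧ (G.WhiteAt φ.1 e ∨ G.CrossAt φ.1 e)

end Valuations

/-! ### Doubling all edges -/

/-- The flag involution of the doubled graph `D(G)`. -/
def dblT1 : (G.E × Bool) × Bool × Bool → (G.E × Bool) × Bool × Bool := fun x =>
  if x.1.2 = x.2.2 then
    (((G.t1 (x.1.1, x.2)).1, (G.t1 (x.1.1, x.2)).2.2), (G.t1 (x.1.1, x.2)).2)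
  else ((x.1.1, x.2.2), x.2.1, x.1.2)

lemma dblT1_invol : Function.Involutive G.dblT1 := by
  rintro ⟨⟨e, i⟩, a, b⟩
  by_cases h : i = b
  · subst h
    simp [dblT1, G.inv1 (e, a, i)]
  · simp [dblT1, h, Ne.symm h]

lemma dblT1_fix (x) : G.dblT1 x ≠ x := by
  rintro hcon
  obtain ⟨⟨e, i⟩, a, b⟩ := x
  by_cases h : i = b
  · subst h
    simp only [dblT1, if_pos rfl] at hcon
    have h1 : (G.t1 (e, a, i)).1 = e := congrArg (fun z => z.1.1) hcon
    have h2 : (G.t1 (e, a, i)).2 = (a, i) := congrArg (fun z => z.2) hcon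
    exact G.fix1 (e, a, i) (Prod.ext h1 h2)
  · simp only [dblT1, if_neg h] at hcon
    have h1 : b = i := congrArg (fun z => z.1.2) hcon
    exact h h1.symm

/-- The embedded graph `D(G)` obtained from `G` by doubling every edge: for each edge a
parallel copy is embedded so that the two copies bound a bigon face. -/
def double : RibbonGraph where
  E := G.E × Bool
  fintypeE := inferInstance
  decE := inferInstance
  isolated := G.isolated
  t1 := G.dblT1
  inv1 := G.dblT1_invol
  fix1 := G.dblT1_fix

end RibbonGraph

/-! ### Auxiliary machinery for the main theorem -/

section GraphTools

open SimpleGraph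

variable {α : Type}

/-- The graph with the single edge `{a, b}` (when `a ≠ b`). -/
def egr (a b : α) : SimpleGraph α := SimpleGraph.fromRel (fun x y => x = a ∧ y = b)

lemma egr_adj {a b x y : α} :
    (egr a b).Adj x y ↔ x ≠ y ∧ ((x = a ∧ y = b) ∨ (y = a ∧ x = b)) := by
  simp [egr, SimpleGraph.fromRel_adj, and_comm]

lemma egr_reachable {G : SimpleGraph α} {a b : α} (h : a ≠ b) :
    (G ⊔ egr a b).Reachable a b := by
  refine Adj.reachable ?_
  rw [sup_adj, egr_adj]
  exact Or.inr ⟨h, Or.inl ⟨rfl, rfl⟩⟩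

lemma reach_of_le {G G' : SimpleGraph α} (h : G ≤ G') {x y : α}
    (r : G.Reachable x y) : G'.Reachable x y :=
  r.map (SimpleGraph.Hom.ofLE h)

lemma fromRel_mono {r s : α → α → Prop} (h : ∀ x y, r x y → s x y) :
    SimpleGraph.fromRel r ≤ SimpleGraph.fromRel s := by
  intro x y hxy
  rw [SimpleGraph.fromRel_adj] at hxy ⊢
  exact ⟨hxy.1, hxy.2.imp (h _ _) (h _ _)⟩

lemma fromRel_congr {r s : α → α → Prop} (h : ∀ x y, r x y ↔ s x y) :
    SimpleGraph.fromRel r = SimpleGraph.fromRel s := by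
  ext x y
  rw [SimpleGraph.fromRel_adj, SimpleGraph.fromRel_adj]
  exact and_congr_right fun _ => or_congr (h _ _) (h _ _)

lemma fromRel_or {r s : α → α → Prop} :
    SimpleGraph.fromRel (fun x y => r x y ∨ s x y)
      = SimpleGraph.fromRel r ⊔ SimpleGraph.fromRel s := by
  ext x y
  rw [sup_adj, SimpleGraph.fromRel_adj, SimpleGraph.fromRel_adj, SimpleGraph.fromRel_adj]
  tauto

lemma fromRel_pair_symm {a b : α} :
    SimpleGraph.fromRel (fun x y => (x = a ∧ y = b) ∨ (x = b ∧ y = a)) = egr a b := by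
  ext x y
  rw [SimpleGraph.fromRel_adj, egr_adj]
  tauto

lemma sup_egr_reachable_elim {G : SimpleGraph α} {a b x y : α}
    (h : (G ⊔ egr a b).Reachable x y) :
    G.Reachable x y ∨
      ((G.Reachable x a ∨ G.Reachable x b) ∧ (G.Reachable y a ∨ G.Reachable y b)) := by
  rw [SimpleGraph.reachable_iff_reflTransGen] at h
  induction h with
  | refl => exact Or.inl (Reachable.refl x)
  | @tail u w _ hadj ih =>
    rcases hadj with hG | hE
    · rcases ih with h1 | ⟨h1, h2⟩
      · exact Or.inl (h1.trans hG.reachable)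
      · exact Or.inr ⟨h1, h2.imp (fun t => hG.symm.reachable.trans t)
          (fun t => hG.symm.reachable.trans t)⟩
    · rw [egr_adj] at hE
      rcases hE.2 with ⟨rfl, rfl⟩ | ⟨rfl, rfl⟩
      · rcases ih with h1 | ⟨h1, _⟩
        · exact Or.inr ⟨Or.inl h1, Or.inr (Reachable.refl _)⟩
        · exact Or.inr ⟨h1, Or.inr (Reachable.refl _)⟩
      · rcases ih with h1 | ⟨h1, _⟩
        · exact Or.inr ⟨Or.inr h1, Or.inl (Reachable.refl _)⟩
        · exact Or.inr ⟨h1, Or.inl (Reachable.refl _)⟩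

lemma sup_egr_reachable_iff {G : SimpleGraph α} {a b : α} (hab : G.Reachable a b) (x y : α) :
    (G ⊔ egr a b).Reachable x y ↔ G.Reachable x y := by
  constructor
  · intro h
    rcases sup_egr_reachable_elim h with h1 | ⟨h1, h2⟩
    · exact h1
    · have hx : G.Reachable x a := h1.elim id fun t => t.trans hab.symm
      have hy : G.Reachable y a := h2.elim id fun t => t.trans hab.symm
      exact hx.trans hy.symm
  · exact fun h => reach_of_le le_sup_left h

variable [Finite α]

instance {G : SimpleGraph α} : Finite G.ConnectedComponent :=
  Finite.of_surjective G.connectedComponentMk (fun c => c.exists_rep)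

lemma ncc_le_of_le {G G' : SimpleGraph α} (h : G ≤ G') :
    Nat.card G'.ConnectedComponent ≤ Nat.card G.ConnectedComponent :=
  Nat.card_le_card_of_surjective
    (SimpleGraph.ConnectedComponent.map (SimpleGraph.Hom.ofLE h))
    (fun c => SimpleGraph.ConnectedComponent.ind
      (fun v => ⟨G.connectedComponentMk v, rfl⟩) c)

lemma ncc_congr {G G' : SimpleGraph α} (h : ∀ x y, G.Reachable x y ↔ G'.Reachable x y) :
    Nat.card G.ConnectedComponent = Nat.card G'.ConnectedComponent := by
  refine Nat.card_eq_of_bijective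
    (SimpleGraph.ConnectedComponent.lift (fun v => G'.connectedComponentMk v)
      (fun u v p _ => SimpleGraph.ConnectedComponent.sound ((h u v).mp ⟨p⟩))) ⟨?_, ?_⟩
  · intro c d
    refine SimpleGraph.ConnectedComponent.ind₂ (fun u v => ?_) c d
    intro hcd
    exact SimpleGraph.ConnectedComponent.sound
      ((h u v).mpr (SimpleGraph.ConnectedComponent.exact hcd))
  · intro c'
    exact SimpleGraph.ConnectedComponent.ind (fun v => ⟨G.connectedComponentMk v, rfl⟩) c'

lemma ncc_sup_egr_of_reachable {G : SimpleGraph α} {a b : α} (hab : G.Reachable a b) :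
    Nat.card (G ⊔ egr a b).ConnectedComponent = Nat.card G.ConnectedComponent :=
  ncc_congr (fun x y => sup_egr_reachable_iff hab x y)

lemma ncc_le_sup_egr_succ (G : SimpleGraph α) (a b : α) :
    Nat.card G.ConnectedComponent ≤ Nat.card (G ⊔ egr a b).ConnectedComponent + 1 := by
  classical
  set pt := G.connectedComponentMk b with hpt
  set F : G.ConnectedComponent → ((G ⊔ egr a b).ConnectedComponent ⊕ Unit) :=
    fun c => if c = pt then Sum.inr () else
      Sum.inl (c.map (SimpleGraph.Hom.ofLE le_sup_left)) with hF
  have hinj : Function.Injective F := by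
    intro c d hcd
    by_cases hc : c = pt <;> by_cases hd : d = pt
    · rw [hc, hd]
    · simp only [hF, if_pos hc, if_neg hd] at hcd; exact absurd hcd (by simp)
    · simp only [hF, if_neg hc, if_pos hd] at hcd; exact absurd hcd (by simp)
    · simp only [hF, if_neg hc, if_neg hd, Sum.inl.injEq] at hcd
      obtain ⟨u, rfl⟩ := c.exists_rep
      obtain ⟨v, rfl⟩ := d.exists_rep
      have hreach : (G ⊔ egr a b).Reachable u v :=
        SimpleGraph.ConnectedComponent.exact hcd
      rcases sup_egr_reachable_elim hreach with h1 | ⟨h1, h2⟩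
      · exact SimpleGraph.ConnectedComponent.sound h1
      · have hu : G.Reachable u a := by
          rcases h1 with h1 | h1
          · exact h1
          · exact absurd (SimpleGraph.ConnectedComponent.sound h1) hc
        have hv : G.Reachable v a := by
          rcases h2 with h2 | h2
          · exact h2
          · exact absurd (SimpleGraph.ConnectedComponent.sound h2) hd
        exact SimpleGraph.ConnectedComponent.sound (hu.trans hv.symm)
  have hle := Nat.card_le_card_of_injective F hinj
  have hu : Nat.card Unit = 1 := Nat.card_unique
  rw [Nat.card_sum, hu] at hle
  exact hle

lemma ncc_sup_egr_succ_le {G : SimpleGraph α} {a b : α} (hab : ¬ G.Reachable a b) :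
    Nat.card (G ⊔ egr a b).ConnectedComponent + 1 ≤ Nat.card G.ConnectedComponent := by
  classical
  have hne : a ≠ b := fun h => hab (h ▸ SimpleGraph.Reachable.refl a)
  have hwd : ∀ u v : α, (G ⊔ egr a b).Reachable u v →
      (if G.Reachable u b then G.connectedComponentMk a else G.connectedComponentMk u)
      = (if G.Reachable v b then G.connectedComponentMk a else G.connectedComponentMk v) := by
    intro u v huv
    rw [SimpleGraph.reachable_iff_reflTransGen] at huv
    induction huv with
    | refl => rfl
    | @tail p q _ hadj ih =>
      rw [ih]
      rcases hadj with hG | hE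
      · by_cases hpb : G.Reachable p b
        · rw [if_pos hpb, if_pos (hG.symm.reachable.trans hpb)]
        · have hqb : ¬ G.Reachable q b := fun h => hpb (hG.reachable.trans h)
          rw [if_neg hpb, if_neg hqb]
          exact SimpleGraph.ConnectedComponent.sound hG.reachable
      · rw [egr_adj] at hE
        rcases hE.2 with ⟨rfl, rfl⟩ | ⟨rfl, rfl⟩
        · rw [if_neg hab, if_pos (SimpleGraph.Reachable.refl _)]
        · rw [if_pos (SimpleGraph.Reachable.refl _), if_neg hab]
  set j : (G ⊔ egr a b).ConnectedComponent → G.ConnectedComponent :=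
    SimpleGraph.ConnectedComponent.lift
      (fun v => if G.Reachable v b then G.connectedComponentMk a else G.connectedComponentMk v)
      (fun u v p _ => hwd u v ⟨p⟩) with hj
  have hjmk : ∀ v : α, j (Quot.mk (G ⊔ egr a b).Reachable v)
      = (if G.Reachable v b then G.connectedComponentMk a else G.connectedComponentMk v) :=
    fun v => rfl
  have hmiss : ∀ c, j c ≠ G.connectedComponentMk b := by
    intro c
    obtain ⟨u, rfl⟩ := c.exists_rep
    rw [hjmk]
    by_cases hub : G.Reachable u b
    · rw [if_pos hub]
      exact fun h => hab (SimpleGraph.ConnectedComponent.exact h)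
    · rw [if_neg hub]
      exact fun h => hub (SimpleGraph.ConnectedComponent.exact h)
  have hinj : Function.Injective j := by
    intro c d hcd
    obtain ⟨u, rfl⟩ := c.exists_rep
    obtain ⟨v, rfl⟩ := d.exists_rep
    rw [hjmk, hjmk] at hcd
    by_cases hub : G.Reachable u b <;> by_cases hvb : G.Reachable v b
    · exact SimpleGraph.ConnectedComponent.sound
        (reach_of_le le_sup_left (hub.trans hvb.symm))
    · rw [if_pos hub, if_neg hvb] at hcd
      have h1 : G.Reachable a v := SimpleGraph.ConnectedComponent.exact hcd
      exact SimpleGraph.ConnectedComponent.sound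
        (((reach_of_le le_sup_left hub).trans (egr_reachable hne).symm).trans
          (reach_of_le le_sup_left h1))
    · rw [if_neg hub, if_pos hvb] at hcd
      have h1 : G.Reachable u a := SimpleGraph.ConnectedComponent.exact hcd
      exact SimpleGraph.ConnectedComponent.sound
        (((reach_of_le le_sup_left h1).trans (egr_reachable hne)).trans
          (reach_of_le le_sup_left hvb.symm))
    · rw [if_neg hub, if_neg hvb] at hcd
      exact SimpleGraph.ConnectedComponent.sound
        (reach_of_le le_sup_left (SimpleGraph.ConnectedComponent.exact hcd))
  have h1 : Nat.card (G ⊔ egr a b).ConnectedComponent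
      ≤ Nat.card {c : G.ConnectedComponent // ¬ c = G.connectedComponentMk b} :=
    Nat.card_le_card_of_injective (fun c => ⟨j c, hmiss c⟩)
      (fun c d h => hinj (congrArg Subtype.val h))
  have h2 : Nat.card {c : G.ConnectedComponent // c = G.connectedComponentMk b}
      + Nat.card {c : G.ConnectedComponent // ¬ c = G.connectedComponentMk b}
      = Nat.card G.ConnectedComponent := by
    rw [← Nat.card_sum]
    exact Nat.card_congr (Equiv.sumCompl _)
  have h3 : Nat.card {c : G.ConnectedComponent // c = G.connectedComponentMk b} = 1 := by
    haveI : Unique {c : G.ConnectedComponent // c = G.connectedComponentMk b} :=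
      ⟨⟨⟨_, rfl⟩⟩, fun x => Subtype.ext x.2⟩
    exact Nat.card_unique
  omega

end GraphTools

lemma even_card_of_involutive {β : Type} [DecidableEq β] (s : Finset β) (f : β → β)
    (hmem : ∀ x ∈ s, f x ∈ s) (hne : ∀ x ∈ s, f x ≠ x) (hinv : ∀ x ∈ s, f (f x) = x) :
    Even s.card := by
  generalize hn : s.card = n
  induction n using Nat.strong_induction_on generalizing s with
  | _ n ih =>
    rcases s.eq_empty_or_nonempty with rfl | ⟨a, ha⟩
    · rw [Finset.card_empty] at hn
      exact hn ▸ Even.zero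
    · have hfa : f a ∈ s := hmem a ha
      have hfa' : f a ≠ a := hne a ha
      have hmem' : f a ∈ s.erase a := Finset.mem_erase.mpr ⟨hfa', hfa⟩
      have hc1 : (s.erase a).card = s.card - 1 := Finset.card_erase_of_mem ha
      have hc2 : ((s.erase a).erase (f a)).card = (s.erase a).card - 1 :=
        Finset.card_erase_of_mem hmem'
      have hc3 : 1 ≤ (s.erase a).card := Finset.card_pos.mpr ⟨f a, hmem'⟩
      have hc4 : 1 ≤ s.card := Finset.card_pos.mpr ⟨a, ha⟩
      have hsub : ∀ x ∈ (s.erase a).erase (f a), x ∈ s ∧ x ≠ a ∧ x ≠ f a := by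
        intro x hx
        rw [Finset.mem_erase, Finset.mem_erase] at hx
        exact ⟨hx.2.2, hx.2.1, hx.1⟩
      have hstep : Even ((s.erase a).erase (f a)).card := by
        refine ih (((s.erase a).erase (f a)).card) (by omega) _ ?_ ?_ ?_ rfl
        · intro x hx
          obtain ⟨hxs, hxa, hxfa⟩ := hsub x hx
          rw [Finset.mem_erase, Finset.mem_erase]
          refine ⟨?_, ?_, hmem x hxs⟩
          · intro h
            exact hxa (by rw [← hinv x hxs, h, hinv a ha])
          · intro h
            exact hxfa (by rw [← hinv x hxs, h])
        · exact fun x hx => hne x (hsub x hx).1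
        · exact fun x hx => hinv x (hsub x hx).1
      rcases hstep with ⟨m, hm⟩
      exact ⟨m + 1, by omega⟩

lemma pow_identity {F : Type} [Field F] {u x : F} (hu : u ≠ 0) (hx : x ≠ 0)
    (c r d n g f a : ℕ) (h1 : c + d + n = f + g) (h2 : r + n = a + d) :
    u ^ c * x ^ r * ((u / x) ^ d * (x * u) ^ n * (u⁻¹) ^ g) = u ^ f * x ^ a := by
  have key : u ^ c * x ^ r * ((u / x) ^ d * (x * u) ^ n * (u⁻¹) ^ g)
      = (u ^ (c + d + n) * x ^ (r + n)) / (x ^ d * u ^ g) := by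
    rw [pow_add, pow_add, pow_add]
    rw [div_pow, mul_pow, inv_pow]
    field_simp
  rw [key, h1, h2, pow_add, pow_add]
  field_simp
namespace RibbonGraph

open SimpleGraph

variable (G : RibbonGraph)

lemma t0_ne (x : G.Flag) : G.t0 x ≠ x := by
  obtain ⟨x1, x2, x3⟩ := x
  simp [RibbonGraph.t0]

lemma t2_ne (x : G.Flag) : G.t2 x ≠ x := by
  obtain ⟨x1, x2, x3⟩ := x
  simp [RibbonGraph.t2]

/-- The relation generating connected components of the spanning subgraph. -/
def crel (A : Finset G.E) : G.Flag → G.Flag → Prop :=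
  fun x y => G.t1 x = y ∨ G.t2 x = y ∨ (x.1 ∈ A ∧ G.t0 x = y)

/-- The relation generating boundary components of the spanning subgraph. -/
def frel (A : Finset G.E) : G.Flag → G.Flag → Prop :=
  fun x y => G.t1 x = y ∨ (if x.1 ∈ A then G.t0 x else G.t2 x) = y

/-- The relation for faces with the gluing at a fixed edge `e` removed. -/
def hrel (A : Finset G.E) (e : G.E) : G.Flag → G.Flag → Prop :=
  fun x y => G.t1 x = y ∨ (x.1 ≠ e ∧ (if x.1 ∈ A then G.t0 x else G.t2 x) = y)

lemma cSub_def (A : Finset G.E) :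
    G.cSub A = Nat.card (SimpleGraph.fromRel (G.crel A)).ConnectedComponent + G.isolated := rfl

lemma fSub_def (A : Finset G.E) :
    G.fSub A = Nat.card (SimpleGraph.fromRel (G.frel A)).ConnectedComponent + G.isolated := rfl

lemma vCount_def :
    G.vCount = Nat.card (SimpleGraph.fromRel
      (fun x y : G.Flag => G.t1 x = y ∨ G.t2 x = y)).ConnectedComponent + G.isolated := rfl

lemma cSub_empty : G.cSub (∅ : Finset G.E) = G.vCount := by
  rw [cSub_def, vCount_def]
  have hg : SimpleGraph.fromRel (G.crel (∅ : Finset G.E))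
      = SimpleGraph.fromRel (fun x y : G.Flag => G.t1 x = y ∨ G.t2 x = y) :=
    fromRel_congr (fun x y => by simp [RibbonGraph.crel])
  rw [hg]

lemma fSub_empty : G.fSub (∅ : Finset G.E) = G.vCount := by
  rw [fSub_def, vCount_def]
  have hg : SimpleGraph.fromRel (G.frel (∅ : Finset G.E))
      = SimpleGraph.fromRel (fun x y : G.Flag => G.t1 x = y ∨ G.t2 x = y) :=
    fromRel_congr (fun x y => by simp [RibbonGraph.frel])
  rw [hg]

lemma cSub_le_vCount (A : Finset G.E) : G.cSub A ≤ G.vCount := by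
  rw [cSub_def, vCount_def]
  exact Nat.add_le_add_right
    (ncc_le_of_le (fromRel_mono (fun x y h => by
      rcases h with h | h
      · exact Or.inl h
      · exact Or.inr (Or.inl h)))) _

lemma cCount_le_cSub (A : Finset G.E) : G.cCount ≤ G.cSub A := by
  show G.cSub Finset.univ ≤ G.cSub A
  rw [cSub_def, cSub_def]
  refine Nat.add_le_add_right (ncc_le_of_le (fromRel_mono (fun x y h => ?_))) _
  rcases h with h | h | ⟨_, h⟩
  · exact Or.inl h
  · exact Or.inr (Or.inl h)
  · exact Or.inr (Or.inr ⟨Finset.mem_univ _, h⟩)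

lemma cCount_le_vCount : G.cCount ≤ G.vCount :=
  le_trans (G.cCount_le_cSub ∅) (le_of_eq (G.cSub_empty))

section EdgeStep

variable {G}
variable (A : Finset G.E) (e : G.E)

lemma flag_eq_cases (x : G.Flag) (hx : x.1 = e) :
    x = ((e, true, true) : G.Flag) ∨ x = ((e, false, true) : G.Flag)
      ∨ x = ((e, true, false) : G.Flag) ∨ x = ((e, false, false) : G.Flag) := by
  obtain ⟨x1, x2, x3⟩ := x
  have : x1 = e := hx
  subst this
  cases x2 <;> cases x3 <;> simp

lemma frel_decomp (he : e ∉ A) :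
    SimpleGraph.fromRel (G.frel A)
      = SimpleGraph.fromRel (G.hrel A e)
          ⊔ egr ((e, true, true) : G.Flag) ((e, true, false) : G.Flag)
          ⊔ egr ((e, false, true) : G.Flag) ((e, false, false) : G.Flag) := by
  rw [← fromRel_pair_symm (a := ((e, true, true) : G.Flag)) (b := ((e, true, false) : G.Flag)),
    ← fromRel_pair_symm (a := ((e, false, true) : G.Flag)) (b := ((e, false, false) : G.Flag)),
    ← fromRel_or, ← fromRel_or]
  apply fromRel_congr
  intro x y
  obtain ⟨x1, x2, x3⟩ := x
  obtain ⟨y1, y2, y3⟩ := y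
  simp only [RibbonGraph.frel, RibbonGraph.hrel]
  by_cases hx : x1 = e
  · subst hx
    cases x2 <;> cases x3 <;> cases y2 <;> cases y3 <;>
      simp [RibbonGraph.t0, RibbonGraph.t2, he, Prod.ext_iff] <;> tauto
  · simp [hx, Prod.ext_iff]

lemma frel_insert_decomp (he : e ∉ A) :
    SimpleGraph.fromRel (G.frel (insert e A))
      = SimpleGraph.fromRel (G.hrel A e)
          ⊔ egr ((e, true, true) : G.Flag) ((e, false, true) : G.Flag)
          ⊔ egr ((e, true, false) : G.Flag) ((e, false, false) : G.Flag) := by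
  rw [← fromRel_pair_symm (a := ((e, true, true) : G.Flag)) (b := ((e, false, true) : G.Flag)),
    ← fromRel_pair_symm (a := ((e, true, false) : G.Flag)) (b := ((e, false, false) : G.Flag)),
    ← fromRel_or, ← fromRel_or]
  apply fromRel_congr
  intro x y
  obtain ⟨x1, x2, x3⟩ := x
  obtain ⟨y1, y2, y3⟩ := y
  simp only [RibbonGraph.frel, RibbonGraph.hrel]
  by_cases hx : x1 = e
  · subst hx
    cases x2 <;> cases x3 <;> cases y2 <;> cases y3 <;>
      simp [RibbonGraph.t0, RibbonGraph.t2, he, Prod.ext_iff, Finset.mem_insert] <;> tauto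
  · simp [hx, Prod.ext_iff, Finset.mem_insert]

lemma crel_insert_decomp (he : e ∉ A) :
    SimpleGraph.fromRel (G.crel (insert e A))
      = SimpleGraph.fromRel (G.crel A)
          ⊔ egr ((e, true, true) : G.Flag) ((e, false, true) : G.Flag)
          ⊔ egr ((e, true, false) : G.Flag) ((e, false, false) : G.Flag) := by
  rw [← fromRel_pair_symm (a := ((e, true, true) : G.Flag)) (b := ((e, false, true) : G.Flag)),
    ← fromRel_pair_symm (a := ((e, true, false) : G.Flag)) (b := ((e, false, false) : G.Flag)),
    ← fromRel_or, ← fromRel_or]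
  apply fromRel_congr
  intro x y
  obtain ⟨x1, x2, x3⟩ := x
  obtain ⟨y1, y2, y3⟩ := y
  simp only [RibbonGraph.crel]
  by_cases hx : x1 = e
  · subst hx
    cases x2 <;> cases x3 <;> cases y2 <;> cases y3 <;>
      simp [RibbonGraph.t0, RibbonGraph.t2, he, Prod.ext_iff, Finset.mem_insert] <;> tauto
  · simp [hx, Prod.ext_iff, Finset.mem_insert]

lemma hrel_le_crel :
    SimpleGraph.fromRel (G.hrel A e) ≤ SimpleGraph.fromRel (G.crel A) := by
  refine fromRel_mono (fun x y h => ?_)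
  rcases h with h | ⟨_, h⟩
  · exact Or.inl h
  · by_cases hm : x.1 ∈ A
    · rw [if_pos hm] at h
      exact Or.inr (Or.inr ⟨hm, h⟩)
    · rw [if_neg hm] at h
      exact Or.inr (Or.inl h)

lemma crel_reach_13 :
    (SimpleGraph.fromRel (G.crel A)).Reachable ((e, true, true) : G.Flag) ((e, true, false)) := by
  refine Adj.reachable ?_
  rw [SimpleGraph.fromRel_adj]
  exact ⟨by simp, Or.inl (Or.inr (Or.inl rfl))⟩

lemma crel_reach_24 :
    (SimpleGraph.fromRel (G.crel A)).Reachable ((e, false, true) : G.Flag) ((e, false, false)) := by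
  refine Adj.reachable ?_
  rw [SimpleGraph.fromRel_adj]
  exact ⟨by simp, Or.inl (Or.inr (Or.inl rfl))⟩
lemma core_pairing (he : e ∉ A) (q : G.Flag) (hq : q.1 = e) :
    ∃ q' : G.Flag, q'.1 = e ∧ q' ≠ q ∧
      (SimpleGraph.fromRel (G.hrel A e)).Reachable q q' := by
  classical
  by_contra hcon
  push_neg at hcon
  set H := SimpleGraph.fromRel (G.hrel A e) with hH
  set S : Finset G.Flag := Finset.univ.filter (fun x => H.Reachable q x) with hS
  have hSmem : ∀ x, H.Reachable q x → x ∈ S := by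
    intro x hx
    rw [hS, Finset.mem_filter]
    exact ⟨Finset.mem_univ _, hx⟩
  have hSder : ∀ x ∈ S, H.Reachable q x := by
    intro x hx
    rw [hS, Finset.mem_filter] at hx
    exact hx.2
  have hqS : q ∈ S := hSmem q (SimpleGraph.Reachable.refl q)
  have hflag : ∀ x ∈ S, x.1 = e → x = q := by
    intro x hx hxe
    by_contra hne
    exact hcon x hxe hne (hSder x hx)
  have ht1 : ∀ x ∈ S, G.t1 x ∈ S := by
    intro x hx
    refine hSmem _ ((hSder x hx).trans (Adj.reachable ?_))
    rw [hH, SimpleGraph.fromRel_adj]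
    exact ⟨Ne.symm (G.fix1 x), Or.inl (Or.inl rfl)⟩
  have heven1 : Even S.card :=
    even_card_of_involutive S G.t1 ht1 (fun x _ => G.fix1 x) (fun x _ => G.inv1 x)
  set σ : G.Flag → G.Flag := fun x => if x.1 ∈ A then G.t0 x else G.t2 x with hσ
  have hσ1 : ∀ x, (σ x).1 = x.1 := by
    intro x
    rw [hσ]
    dsimp only
    split <;> rfl
  have hσne : ∀ x, σ x ≠ x := by
    intro x
    rw [hσ]
    dsimp only
    split
    · exact G.t0_ne x
    · exact G.t2_ne x
  have hσinv : ∀ x, σ (σ x) = x := by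
    intro x
    rw [hσ]
    dsimp only
    by_cases hm : x.1 ∈ A
    · rw [if_pos hm, if_pos (show (G.t0 x).1 ∈ A from hm)]
      exact G.t0_invol x
    · rw [if_neg hm, if_neg (show ¬ (G.t2 x).1 ∈ A from hm)]
      exact G.t2_invol x
  have hσS : ∀ x ∈ S.erase q, σ x ∈ S.erase q := by
    intro x hx
    obtain ⟨hxq, hxS⟩ := Finset.mem_erase.mp hx
    have hxe : x.1 ≠ e := fun h => hxq (hflag x hxS h)
    have hadj : H.Adj x (σ x) := by
      rw [hH, SimpleGraph.fromRel_adj]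
      exact ⟨Ne.symm (hσne x), Or.inl (Or.inr ⟨hxe, rfl⟩)⟩
    refine Finset.mem_erase.mpr ⟨?_, hSmem _ ((hSder x hxS).trans hadj.reachable)⟩
    intro h
    exact hxe (by rw [← hσ1 x, h, hq])
  have heven2 : Even (S.erase q).card :=
    even_card_of_involutive _ σ hσS (fun x _ => hσne x) (fun x _ => hσinv x)
  rw [Finset.card_erase_of_mem hqS] at heven2
  have hpos : 1 ≤ S.card := Finset.card_pos.mpr ⟨q, hqS⟩
  rcases heven1 with ⟨m, hm⟩
  rcases heven2 with ⟨l, hl⟩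
  omega

lemma pairing (he : e ∉ A) :
    ((SimpleGraph.fromRel (G.hrel A e)).Reachable ((e, true, true) : G.Flag) ((e, false, true))
      ∧ (SimpleGraph.fromRel (G.hrel A e)).Reachable ((e, true, false) : G.Flag) ((e, false, false)))
    ∨ ((SimpleGraph.fromRel (G.hrel A e)).Reachable ((e, true, true) : G.Flag) ((e, true, false))
      ∧ (SimpleGraph.fromRel (G.hrel A e)).Reachable ((e, false, true) : G.Flag) ((e, false, false)))
    ∨ ((SimpleGraph.fromRel (G.hrel A e)).Reachable ((e, true, true) : G.Flag) ((e, false, false))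
      ∧ (SimpleGraph.fromRel (G.hrel A e)).Reachable ((e, false, true) : G.Flag) ((e, true, false))) := by
  set H := SimpleGraph.fromRel (G.hrel A e) with hH
  have partner : ∀ x : G.Flag, x.1 = e →
      ∃ y : G.Flag, y.1 = e ∧ y ≠ x ∧ H.Reachable x y :=
    fun x hx => core_pairing A e he x hx
  -- notation
  set a1 : G.Flag := (e, true, true) with ha1
  set a2 : G.Flag := (e, false, true) with ha2
  set a3 : G.Flag := (e, true, false) with ha3
  set a4 : G.Flag := (e, false, false) with ha4
  have hcases : ∀ x : G.Flag, x.1 = e → x = a1 ∨ x = a2 ∨ x = a3 ∨ x = a4 :=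
    fun x hx => flag_eq_cases e x hx
  obtain ⟨p, hpe, hpne, hp⟩ := partner a1 rfl
  rcases hcases p hpe with rfl | rfl | rfl | rfl
  · exact absurd rfl hpne
  · -- R a1 a2 : prove R a3 a4, yielding the left disjunct
    left
    refine ⟨hp, ?_⟩
    obtain ⟨r, hre, hrne, hr⟩ := partner a3 rfl
    rcases hcases r hre with rfl | rfl | rfl | rfl
    · -- a3 ~ a1 : cluster {1,2,3}; partner of a4 lands in cluster
      obtain ⟨s, hse, hsne, hs⟩ := partner a4 rfl
      rcases hcases s hse with rfl | rfl | rfl | rfl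
      · exact hr.trans (hs.symm)
      · exact hr.trans (hp.trans hs.symm)
      · exact hs.symm
      · exact absurd rfl hsne
    · -- a3 ~ a2
      obtain ⟨s, hse, hsne, hs⟩ := partner a4 rfl
      rcases hcases s hse with rfl | rfl | rfl | rfl
      · exact hr.trans (hp.symm.trans hs.symm)
      · exact hr.trans hs.symm
      · exact hs.symm
      · exact absurd rfl hsne
    · exact absurd rfl hrne
    · exact hr
  · -- R a1 a3 : prove R a2 a4, middle disjunct
    right; left
    refine ⟨hp, ?_⟩
    obtain ⟨r, hre, hrne, hr⟩ := partner a2 rfl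
    rcases hcases r hre with rfl | rfl | rfl | rfl
    · obtain ⟨s, hse, hsne, hs⟩ := partner a4 rfl
      rcases hcases s hse with rfl | rfl | rfl | rfl
      · exact hr.trans hs.symm
      · exact hs.symm
      · exact hr.trans (hp.trans hs.symm)
      · exact absurd rfl hsne
    · exact absurd rfl hrne
    · obtain ⟨s, hse, hsne, hs⟩ := partner a4 rfl
      rcases hcases s hse with rfl | rfl | rfl | rfl
      · exact hr.trans (hp.symm.trans hs.symm)
      · exact hs.symm
      · exact hr.trans hs.symm
      · exact absurd rfl hsne
    · exact hr
  · -- R a1 a4 : prove R a2 a3, right disjunct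
    right; right
    refine ⟨hp, ?_⟩
    obtain ⟨r, hre, hrne, hr⟩ := partner a2 rfl
    rcases hcases r hre with rfl | rfl | rfl | rfl
    · obtain ⟨s, hse, hsne, hs⟩ := partner a3 rfl
      rcases hcases s hse with rfl | rfl | rfl | rfl
      · exact hr.trans hs.symm
      · exact hs.symm
      · exact absurd rfl hsne
      · exact hr.trans (hp.trans hs.symm)
    · exact absurd rfl hrne
    · exact hr
    · obtain ⟨s, hse, hsne, hs⟩ := partner a3 rfl
      rcases hcases s hse with rfl | rfl | rfl | rfl
      · exact hr.trans (hp.symm.trans hs.symm)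
      · exact hs.symm
      · exact absurd rfl hsne
      · exact hr.trans hs.symm

end EdgeStep
section Counting

variable {G}

lemma ncc_crel_insert (A : Finset G.E) (e : G.E) (he : e ∉ A) :
    Nat.card (SimpleGraph.fromRel (G.crel (insert e A))).ConnectedComponent
      = Nat.card ((SimpleGraph.fromRel (G.crel A))
          ⊔ egr ((e, true, true) : G.Flag) ((e, false, true))).ConnectedComponent := by
  rw [crel_insert_decomp A e he]
  refine ncc_sup_egr_of_reachable ?_
  -- (e,true,false) ~ (e,false,false) in K₀ ⊔ egr q1 q2
  have h13 : (SimpleGraph.fromRel (G.crel A)).Reachable ((e, true, true) : G.Flag) ((e, true, false)) :=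
    crel_reach_13 A e
  have h24 : (SimpleGraph.fromRel (G.crel A)).Reachable ((e, false, true) : G.Flag) ((e, false, false)) :=
    crel_reach_24 A e
  have h12 : ((SimpleGraph.fromRel (G.crel A))
      ⊔ egr ((e, true, true) : G.Flag) ((e, false, true))).Reachable
        ((e, true, true) : G.Flag) ((e, false, true)) :=
    egr_reachable (by simp)
  exact ((reach_of_le le_sup_left h13.symm).trans h12).trans (reach_of_le le_sup_left h24)

lemma cSub_le_cSub_insert_succ (A : Finset G.E) (e : G.E) (he : e ∉ A) :
    G.cSub A ≤ G.cSub (insert e A) + 1 := by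
  rw [cSub_def, cSub_def, ncc_crel_insert A e he]
  have := ncc_le_sup_egr_succ (SimpleGraph.fromRel (G.crel A))
    ((e, true, true) : G.Flag) ((e, false, true))
  omega

lemma cSub_insert_le (A : Finset G.E) (e : G.E) (he : e ∉ A) :
    G.cSub (insert e A) ≤ G.cSub A := by
  rw [cSub_def, cSub_def, crel_insert_decomp A e he]
  have h1 : SimpleGraph.fromRel (G.crel A)
      ≤ SimpleGraph.fromRel (G.crel A)
          ⊔ egr ((e, true, true) : G.Flag) ((e, false, true) : G.Flag) := le_sup_left
  have h2 : SimpleGraph.fromRel (G.crel A)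
        ⊔ egr ((e, true, true) : G.Flag) ((e, false, true) : G.Flag)
      ≤ SimpleGraph.fromRel (G.crel A)
          ⊔ egr ((e, true, true) : G.Flag) ((e, false, true) : G.Flag)
          ⊔ egr ((e, true, false) : G.Flag) ((e, false, false) : G.Flag) := le_sup_left
  have := ncc_le_of_le (h1.trans h2)
  omega

lemma vCount_le_card_add_cSub (A : Finset G.E) : G.vCount ≤ A.card + G.cSub A := by
  classical
  induction A using Finset.induction_on with
  | empty => simp [G.cSub_empty]
  | @insert e A he ih =>
    have h := cSub_le_cSub_insert_succ A e he
    rw [Finset.card_insert_of_notMem he]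
    omega

lemma genus_nonneg (A : Finset G.E) : G.vCount + G.fSub A ≤ 2 * G.cSub A + A.card := by
  classical
  induction A using Finset.induction_on with
  | empty =>
    rw [RibbonGraph.cSub_empty, RibbonGraph.fSub_empty, Finset.card_empty]
    omega
  | @insert e A he ih =>
    rw [Finset.card_insert_of_notMem he]
    set H := SimpleGraph.fromRel (G.hrel A e) with hHdef
    set K := SimpleGraph.fromRel (G.crel A) with hKdef
    set b1 : G.Flag := (e, true, true) with hb1
    set b2 : G.Flag := (e, false, true) with hb2
    set b3 : G.Flag := (e, true, false) with hb3
    set b4 : G.Flag := (e, false, false) with hb4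
    have hne12 : b1 ≠ b2 := by simp [hb1, hb2]
    have hne13 : b1 ≠ b3 := by simp [hb1, hb3]
    have hne24 : b2 ≠ b4 := by simp [hb2, hb4]
    have hne34 : b3 ≠ b4 := by simp [hb3, hb4]
    have hK13 : K.Reachable b1 b3 := crel_reach_13 A e
    have hK24 : K.Reachable b2 b4 := crel_reach_24 A e
    have hHK : H ≤ K := hrel_le_crel A e
    have hF0 : SimpleGraph.fromRel (G.frel A) = H ⊔ egr b1 b3 ⊔ egr b2 b4 :=
      frel_decomp A e he
    have hF1 : SimpleGraph.fromRel (G.frel (insert e A)) = H ⊔ egr b1 b2 ⊔ egr b3 b4 :=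
      frel_insert_decomp A e he
    have hK1 : SimpleGraph.fromRel (G.crel (insert e A)) = K ⊔ egr b1 b2 ⊔ egr b3 b4 :=
      crel_insert_decomp A e he
    -- abbreviations for the counts
    have hf0 : G.fSub A
        = Nat.card (H ⊔ egr b1 b3 ⊔ egr b2 b4).ConnectedComponent + G.isolated := by
      rw [fSub_def, hF0]
    have hf1 : G.fSub (insert e A)
        = Nat.card (H ⊔ egr b1 b2 ⊔ egr b3 b4).ConnectedComponent + G.isolated := by
      rw [fSub_def, hF1]
    have hc1 : G.cSub (insert e A)
        = Nat.card (K ⊔ egr b1 b2 ⊔ egr b3 b4).ConnectedComponent + G.isolated := by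
      rw [cSub_def, hK1]
    have hc0 : G.cSub A = Nat.card K.ConnectedComponent + G.isolated := by rw [cSub_def]
    -- generic bounds
    have hf1_le_H : Nat.card (H ⊔ egr b1 b2 ⊔ egr b3 b4).ConnectedComponent
        ≤ Nat.card H.ConnectedComponent :=
      ncc_le_of_le ((le_sup_left : H ≤ H ⊔ egr b1 b2).trans le_sup_left)
    -- case analysis on the pairing of the four flags of e in H
    rcases pairing A e he with ⟨h12, h34⟩ | ⟨h13, h24⟩ | ⟨h14, h23⟩
    · -- pairing (12)(34)
      -- c is unchanged
      have hcK : G.cSub (insert e A) = G.cSub A := by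
        rw [hc1, hc0]
        have e1 : Nat.card (K ⊔ egr b1 b2 ⊔ egr b3 b4).ConnectedComponent
            = Nat.card (K ⊔ egr b1 b2).ConnectedComponent :=
          ncc_sup_egr_of_reachable (reach_of_le le_sup_left (reach_of_le hHK h34))
        have e2 : Nat.card (K ⊔ egr b1 b2).ConnectedComponent = Nat.card K.ConnectedComponent :=
          ncc_sup_egr_of_reachable (reach_of_le hHK h12)
        rw [e1, e2]
      -- f₁ = ncc H
      have hf1H : Nat.card (H ⊔ egr b1 b2 ⊔ egr b3 b4).ConnectedComponent
          = Nat.card H.ConnectedComponent := by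
        have e1 : Nat.card (H ⊔ egr b1 b2 ⊔ egr b3 b4).ConnectedComponent
            = Nat.card (H ⊔ egr b1 b2).ConnectedComponent :=
          ncc_sup_egr_of_reachable (reach_of_le le_sup_left h34)
        have e2 : Nat.card (H ⊔ egr b1 b2).ConnectedComponent = Nat.card H.ConnectedComponent :=
          ncc_sup_egr_of_reachable h12
        rw [e1, e2]
      -- f₀ ≥ ncc H - 1
      have hf0ge : Nat.card H.ConnectedComponent
          ≤ Nat.card (H ⊔ egr b1 b3 ⊔ egr b2 b4).ConnectedComponent + 1 := by
        have e1 : Nat.card (H ⊔ egr b1 b3 ⊔ egr b2 b4).ConnectedComponent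
            = Nat.card (H ⊔ egr b1 b3).ConnectedComponent := by
          refine ncc_sup_egr_of_reachable ?_
          have t1 : (H ⊔ egr b1 b3).Reachable b2 b1 := reach_of_le le_sup_left h12.symm
          have t2 : (H ⊔ egr b1 b3).Reachable b1 b3 := egr_reachable hne13
          have t3 : (H ⊔ egr b1 b3).Reachable b3 b4 := reach_of_le le_sup_left h34
          exact (t1.trans t2).trans t3
        rw [e1]
        exact ncc_le_sup_egr_succ H b1 b3
      omega
    · -- pairing (13)(24)
      -- f₀ = ncc H
      have hf0H : Nat.card (H ⊔ egr b1 b3 ⊔ egr b2 b4).ConnectedComponent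
          = Nat.card H.ConnectedComponent := by
        have e1 : Nat.card (H ⊔ egr b1 b3 ⊔ egr b2 b4).ConnectedComponent
            = Nat.card (H ⊔ egr b1 b3).ConnectedComponent :=
          ncc_sup_egr_of_reachable (reach_of_le le_sup_left h24)
        have e2 : Nat.card (H ⊔ egr b1 b3).ConnectedComponent = Nat.card H.ConnectedComponent :=
          ncc_sup_egr_of_reachable h13
        rw [e1, e2]
      by_cases hdrop : K.Reachable b1 b2
      · -- c unchanged
        have hcK : G.cSub (insert e A) = G.cSub A := by
          rw [hc1, hc0]
          have e1 : Nat.card (K ⊔ egr b1 b2 ⊔ egr b3 b4).ConnectedComponent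
              = Nat.card (K ⊔ egr b1 b2).ConnectedComponent := by
            refine ncc_sup_egr_of_reachable ?_
            have t1 : (K ⊔ egr b1 b2).Reachable b3 b1 := reach_of_le le_sup_left hK13.symm
            have t2 : (K ⊔ egr b1 b2).Reachable b1 b2 := egr_reachable hne12
            have t3 : (K ⊔ egr b1 b2).Reachable b2 b4 := reach_of_le le_sup_left hK24
            exact (t1.trans t2).trans t3
          have e2 : Nat.card (K ⊔ egr b1 b2).ConnectedComponent = Nat.card K.ConnectedComponent :=
            ncc_sup_egr_of_reachable hdrop
          rw [e1, e2]
        omega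
      · -- c drops; f₁ drops strictly
        have hH12 : ¬ H.Reachable b1 b2 := fun h => hdrop (reach_of_le hHK h)
        have hstrict : Nat.card (H ⊔ egr b1 b2).ConnectedComponent + 1
            ≤ Nat.card H.ConnectedComponent := ncc_sup_egr_succ_le hH12
        have hf1le : Nat.card (H ⊔ egr b1 b2 ⊔ egr b3 b4).ConnectedComponent
            ≤ Nat.card (H ⊔ egr b1 b2).ConnectedComponent :=
          ncc_le_of_le le_sup_left
        have hcmono : G.cSub A ≤ G.cSub (insert e A) + 1 :=
          cSub_le_cSub_insert_succ A e he
        omega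
    · -- pairing (14)(23)
      have hcK : G.cSub (insert e A) = G.cSub A := by
        rw [hc1, hc0]
        have e1 : Nat.card (K ⊔ egr b1 b2 ⊔ egr b3 b4).ConnectedComponent
            = Nat.card (K ⊔ egr b1 b2).ConnectedComponent := by
          refine ncc_sup_egr_of_reachable ?_
          have t1 : (K ⊔ egr b1 b2).Reachable b3 b2 := reach_of_le le_sup_left (reach_of_le hHK h23.symm)
          have t2 : (K ⊔ egr b1 b2).Reachable b2 b1 := (egr_reachable hne12).symm
          have t3 : (K ⊔ egr b1 b2).Reachable b1 b4 := reach_of_le le_sup_left (reach_of_le hHK h14)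
          exact (t1.trans t2).trans t3
        have e2 : Nat.card (K ⊔ egr b1 b2).ConnectedComponent = Nat.card K.ConnectedComponent := by
          refine ncc_sup_egr_of_reachable ?_
          exact (reach_of_le hHK h14).trans hK24.symm
        rw [e1, e2]
      have hf0ge : Nat.card H.ConnectedComponent
          ≤ Nat.card (H ⊔ egr b1 b3 ⊔ egr b2 b4).ConnectedComponent + 1 := by
        have e1 : Nat.card (H ⊔ egr b1 b3 ⊔ egr b2 b4).ConnectedComponent
            = Nat.card (H ⊔ egr b1 b3).ConnectedComponent := by
          refine ncc_sup_egr_of_reachable ?_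
          have t1 : (H ⊔ egr b1 b3).Reachable b2 b3 := reach_of_le le_sup_left h23
          have t2 : (H ⊔ egr b1 b3).Reachable b3 b1 := (egr_reachable hne13).symm
          have t3 : (H ⊔ egr b1 b3).Reachable b1 b4 := reach_of_le le_sup_left h14
          exact (t1.trans t2).trans t3
        rw [e1]
        exact ncc_le_sup_egr_succ H b1 b3
      omega

end Counting
section Valuations

variable {G}
variable {k : ℕ}

lemma totalAt_whiteAt {c : G.Flag → Fin k} {a : G.E} (h : G.TotalAt c a) : G.WhiteAt c a :=
  ⟨h.1, h.2.1.symm.trans h.2.2⟩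

lemma totalAt_blackAt {c : G.Flag → Fin k} {a : G.E} (h : G.TotalAt c a) : G.BlackAt c a :=
  ⟨h.2.1, h.1.symm.trans h.2.2⟩

lemma whiteAt_blackAt_totalAt {c : G.Flag → Fin k} {a : G.E}
    (hw : G.WhiteAt c a) (hb : G.BlackAt c a) : G.TotalAt c a :=
  ⟨hw.1, hb.1, hb.1.trans hw.2⟩

lemma crossAt_whiteAt_totalAt {c : G.Flag → Fin k} {a : G.E}
    (hc : G.CrossAt c a) (hw : G.WhiteAt c a) : G.TotalAt c a :=
  ⟨hw.1, hw.1.trans hc.2.symm, hc.1⟩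

lemma crossAt_blackAt_totalAt {c : G.Flag → Fin k} {a : G.E}
    (hc : G.CrossAt c a) (hb : G.BlackAt c a) : G.TotalAt c a :=
  ⟨hb.1.trans hc.2, hb.1, hc.1⟩

/-- A valuation is compatible with `A` if it is white at `A` and black off `A`. -/
def Compat (φ : (G.Flag → Fin k) × (Fin G.isolated → Fin k)) (A : Finset G.E) : Prop :=
  (∀ x, φ.1 (G.t1 x) = φ.1 x) ∧ (∀ a ∈ A, G.WhiteAt φ.1 a) ∧ (∀ a ∉ A, G.BlackAt φ.1 a)

lemma compat_mem_kvalsR {φ : (G.Flag → Fin k) × (Fin G.isolated → Fin k)} {A : Finset G.E}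
    (h : Compat φ A) : φ ∈ G.kvalsR k := by
  classical
  rw [RibbonGraph.kvalsR, Finset.mem_filter]
  refine ⟨Finset.mem_univ _, ⟨h.1, fun a => ?_⟩, fun a hcr => ?_⟩
  · by_cases ha : a ∈ A
    · exact Or.inl (h.2.1 a ha)
    · exact Or.inr (Or.inl (h.2.2 a ha))
  · obtain ⟨hc, hnt⟩ := hcr
    by_cases ha : a ∈ A
    · exact hnt (crossAt_whiteAt_totalAt hc (h.2.1 a ha))
    · exact hnt (crossAt_blackAt_totalAt hc (h.2.2 a ha))

lemma compat_iff_invariant (φ : (G.Flag → Fin k) × (Fin G.isolated → Fin k)) (A : Finset G.E) :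
    Compat φ A ↔ ∀ x y : G.Flag, G.frel A x y → φ.1 x = φ.1 y := by
  constructor
  · rintro ⟨h1, hw, hb⟩ x y h
    rcases h with h | h
    · subst h
      exact (h1 x).symm
    · by_cases hm : x.1 ∈ A
      · rw [if_pos hm] at h
        subst h
        obtain ⟨x1, x2, x3⟩ := x
        obtain ⟨hww1, hww2⟩ := hw x1 hm
        cases x2 <;> cases x3
        · exact hww2.symm
        · exact hww1.symm
        · exact hww2
        · exact hww1
      · rw [if_neg hm] at h
        subst h
        obtain ⟨x1, x2, x3⟩ := x
        obtain ⟨hbb1, hbb2⟩ := hb x1 hm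
        cases x2 <;> cases x3
        · exact hbb2.symm
        · exact hbb2
        · exact hbb1.symm
        · exact hbb1
  · intro h
    refine ⟨fun x => (h x (G.t1 x) (Or.inl rfl)).symm, fun a ha => ?_, fun a ha => ?_⟩
    · constructor
      · exact h ((a, true, true) : G.Flag) ((a, false, true))
          (Or.inr (by simp [ha, RibbonGraph.t0]))
      · exact h ((a, true, false) : G.Flag) ((a, false, false))
          (Or.inr (by simp [ha, RibbonGraph.t0]))
    · constructor
      · exact h ((a, true, true) : G.Flag) ((a, true, false))
          (Or.inr (by simp [ha, RibbonGraph.t2]))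
      · exact h ((a, false, true) : G.Flag) ((a, false, false))
          (Or.inr (by simp [ha, RibbonGraph.t2]))

lemma frel_invariant_const {A : Finset G.E} (c : G.Flag → Fin k)
    (h : ∀ x y, G.frel A x y → c x = c y) {u v : G.Flag}
    (huv : (SimpleGraph.fromRel (G.frel A)).Reachable u v) : c u = c v := by
  rw [SimpleGraph.reachable_iff_reflTransGen] at huv
  induction huv with
  | refl => rfl
  | @tail p q _ hadj ih =>
    rw [ih]
    rw [SimpleGraph.fromRel_adj] at hadj
    rcases hadj.2 with hr | hr
    · exact h _ _ hr
    · exact (h _ _ hr).symm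

lemma card_compat (A : Finset G.E) (k : ℕ) :
    (Finset.univ.filter
      (fun φ : (G.Flag → Fin k) × (Fin G.isolated → Fin k) => Compat φ A)).card
      = k ^ G.fSub A := by
  classical
  have h1 : (Finset.univ.filter
      (fun φ : (G.Flag → Fin k) × (Fin G.isolated → Fin k) => Compat φ A)).card
      = Nat.card {φ : (G.Flag → Fin k) × (Fin G.isolated → Fin k) // Compat φ A} := by
    rw [Nat.card_eq_fintype_card, Fintype.card_subtype]
  rw [h1]
  have E1 : {φ : (G.Flag → Fin k) × (Fin G.isolated → Fin k) // Compat φ A}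
      ≃ ({c : G.Flag → Fin k // ∀ x y, G.frel A x y → c x = c y}
          × (Fin G.isolated → Fin k)) :=
    { toFun := fun φ => (⟨φ.1.1, (compat_iff_invariant φ.1 A).mp φ.2⟩, φ.1.2)
      invFun := fun p => ⟨(p.1.1, p.2), (compat_iff_invariant (p.1.1, p.2) A).mpr p.1.2⟩
      left_inv := fun _ => rfl
      right_inv := fun _ => rfl }
  have E2 : {c : G.Flag → Fin k // ∀ x y, G.frel A x y → c x = c y}
      ≃ ((SimpleGraph.fromRel (G.frel A)).ConnectedComponent → Fin k) :=
    { toFun := fun c => SimpleGraph.ConnectedComponent.lift c.1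
        (fun u v p _ => frel_invariant_const c.1 c.2 ⟨p⟩)
      invFun := fun g => ⟨fun v => g ((SimpleGraph.fromRel (G.frel A)).connectedComponentMk v),
        by
          intro x y hxy
          by_cases hxy' : x = y
          · rw [hxy']
          · refine congrArg g (SimpleGraph.ConnectedComponent.sound (Adj.reachable ?_))
            rw [SimpleGraph.fromRel_adj]
            exact ⟨hxy', Or.inl hxy⟩⟩
      left_inv := fun c => Subtype.ext rfl
      right_inv := fun g => funext fun cc =>
        SimpleGraph.ConnectedComponent.ind (fun v => rfl) cc }
  rw [Nat.card_congr (E1.trans (Equiv.prodCongr E2 (Equiv.refl _)))]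
  rw [Nat.card_prod, Nat.card_fun, Nat.card_fun]
  have hfin : ∀ n : ℕ, Nat.card (Fin n) = n := fun n => by
    rw [Nat.card_eq_fintype_card, Fintype.card_fin]
  rw [hfin, hfin, fSub_def, pow_add]

lemma sum_compat_eq (k : ℕ) (φ : (G.Flag → Fin k) × (Fin G.isolated → Fin k))
    (hφ : φ ∈ G.kvalsR k) :
    ∑ A ∈ Finset.univ.filter (fun A : Finset G.E => Compat φ A),
        (RatFunc.X : RatFunc ℚ) ^ A.card
      = (RatFunc.X + 1) ^ G.totalCount φ.1 * RatFunc.X ^ G.whiteCount φ.1 := by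
  classical
  rw [RibbonGraph.kvalsR, Finset.mem_filter] at hφ
  obtain ⟨-, ⟨hval1, hval2⟩, hperm⟩ := hφ
  set W : Finset G.E := Finset.univ.filter
    (fun a => G.WhiteAt φ.1 a ∧ ¬ G.TotalAt φ.1 a) with hW
  set T : Finset G.E := Finset.univ.filter (fun a => G.TotalAt φ.1 a) with hT
  have hWT : ∀ a, a ∈ W → a ∉ T := by
    intro a ha hat
    rw [hW, Finset.mem_filter] at ha
    rw [hT, Finset.mem_filter] at hat
    exact ha.2.2 hat.2
  have himage : Finset.univ.filter (fun A : Finset G.E => Compat φ A)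
      = T.powerset.image (fun S => W ∪ S) := by
    ext A
    rw [Finset.mem_filter, Finset.mem_image]
    constructor
    · rintro ⟨-, hA⟩
      refine ⟨A ∩ T, Finset.mem_powerset.mpr (Finset.inter_subset_right), ?_⟩
      ext a
      rw [Finset.mem_union, Finset.mem_inter]
      constructor
      · rintro (ha | ⟨ha, -⟩)
        · by_contra hna
          rw [hW, Finset.mem_filter] at ha
          exact ha.2.2 (whiteAt_blackAt_totalAt ha.2.1 (hA.2.2 a hna))
        · exact ha
      · intro ha
        by_cases hta : G.TotalAt φ.1 a
        · exact Or.inr ⟨ha, by rw [hT, Finset.mem_filter]; exact ⟨Finset.mem_univ _, hta⟩⟩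
        · refine Or.inl ?_
          rw [hW, Finset.mem_filter]
          exact ⟨Finset.mem_univ _, hA.2.1 a ha, hta⟩
    · rintro ⟨S, hS, rfl⟩
      rw [Finset.mem_powerset] at hS
      refine ⟨Finset.mem_univ _, hval1, fun a ha => ?_, fun a ha => ?_⟩
      · rcases Finset.mem_union.mp ha with ha | ha
        · rw [hW, Finset.mem_filter] at ha
          exact ha.2.1
        · have := hS ha
          rw [hT, Finset.mem_filter] at this
          exact totalAt_whiteAt this.2
      · rw [Finset.mem_union, not_or] at ha
        obtain ⟨haW, haS⟩ := ha
        by_cases hta : G.TotalAt φ.1 a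
        · exact totalAt_blackAt hta
        · rcases hval2 a with hw | hb | hc
          · exact absurd (by rw [hW, Finset.mem_filter]; exact ⟨Finset.mem_univ _, hw, hta⟩) haW
          · exact hb
          · exact absurd ⟨hc, hta⟩ (hperm a)
  rw [himage]
  have hinter : ∀ S ∈ T.powerset, (W ∪ S) ∩ T = S := by
    intro S hS
    rw [Finset.mem_powerset] at hS
    ext a
    rw [Finset.mem_inter, Finset.mem_union]
    constructor
    · rintro ⟨ha | ha, hat⟩
      · exact absurd hat (hWT a ha)
      · exact ha
    · intro ha
      exact ⟨Or.inr ha, hS ha⟩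
  rw [Finset.sum_image (fun S1 h1 S2 h2 h => by
    rw [← hinter S1 h1, ← hinter S2 h2, h])]
  have hcard : ∀ S ∈ T.powerset, (W ∪ S).card = W.card + S.card := by
    intro S hS
    rw [Finset.mem_powerset] at hS
    refine Finset.card_union_of_disjoint (Finset.disjoint_left.mpr ?_)
    intro a ha hs
    exact hWT a ha (hS hs)
  rw [Finset.sum_congr rfl (fun S hS => by rw [hcard S hS, pow_add])]
  rw [← Finset.mul_sum]
  have hbin : ∑ S ∈ T.powerset, (RatFunc.X : RatFunc ℚ) ^ S.card
      = (RatFunc.X + 1) ^ T.card := by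
    have := Finset.prod_add (fun _ : G.E => (RatFunc.X : RatFunc ℚ)) (fun _ => 1) T
    simp only [Finset.prod_const, Finset.prod_const_one, one_pow, mul_one] at this
    exact this.symm
  rw [hbin]
  have hTtot : T.card = G.totalCount φ.1 := rfl
  have hWwh : W.card = G.whiteCount φ.1 := rfl
  rw [hTtot, hWwh, mul_comm]

lemma rhs_eq (k : ℕ) :
    ∑ φ ∈ G.kvalsR k,
        ((RatFunc.X + 1) ^ G.totalCount φ.1 * RatFunc.X ^ G.whiteCount φ.1)
      = ∑ A : Finset G.E, (k : RatFunc ℚ) ^ G.fSub A * RatFunc.X ^ A.card := by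
  classical
  calc
    ∑ φ ∈ G.kvalsR k, ((RatFunc.X + 1) ^ G.totalCount φ.1 * RatFunc.X ^ G.whiteCount φ.1)
      = ∑ φ ∈ G.kvalsR k, ∑ A ∈ Finset.univ.filter (fun A : Finset G.E => Compat φ A),
          (RatFunc.X : RatFunc ℚ) ^ A.card :=
        Finset.sum_congr rfl (fun φ hφ => (sum_compat_eq k φ hφ).symm)
    _ = ∑ φ ∈ G.kvalsR k, ∑ A : Finset G.E,
          (if Compat φ A then (RatFunc.X : RatFunc ℚ) ^ A.card else 0) := by
        refine Finset.sum_congr rfl fun φ _ => ?_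
        rw [Finset.sum_filter]
    _ = ∑ A : Finset G.E, ∑ φ ∈ G.kvalsR k,
          (if Compat φ A then (RatFunc.X : RatFunc ℚ) ^ A.card else 0) := Finset.sum_comm
    _ = ∑ A : Finset G.E,
          ∑ φ : (G.Flag → Fin k) × (Fin G.isolated → Fin k),
          (if Compat φ A then (RatFunc.X : RatFunc ℚ) ^ A.card else 0) := by
        refine Finset.sum_congr rfl fun A _ => ?_
        refine Finset.sum_subset (Finset.subset_univ _) (fun φ _ hφ => ?_)
        exact if_neg (fun hc => hφ (compat_mem_kvalsR hc))
    _ = ∑ A : Finset G.E,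
          ((Finset.univ.filter
            (fun φ : (G.Flag → Fin k) × (Fin G.isolated → Fin k) => Compat φ A)).card : RatFunc ℚ)
            * RatFunc.X ^ A.card := by
        refine Finset.sum_congr rfl fun A _ => ?_
        rw [← Finset.sum_filter, Finset.sum_const, nsmul_eq_mul]
    _ = ∑ A : Finset G.E, (k : RatFunc ℚ) ^ G.fSub A * RatFunc.X ^ A.card := by
        refine Finset.sum_congr rfl fun A _ => ?_
        rw [card_compat A k]
        push_cast
        ring

end Valuations

end RibbonGraph

/-- **Theorem.** For an embedded graph `G` and a natural number `k`, as an identity of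
rational functions in a variable `b`,
`k^{c(G)} · b^{r(G)} · R(G; (k+b)/b, bk, 1/k) = Σ_{φ ∈ R(G_m,k)} (b+1)^{total(φ)} · b^{white(φ)}`,
the sum being over all `R`-permissible `k`-valuations of the canonically checkerboard
coloured medial graph `G_m`. -/
theorem BR_eq_sum_over_R_permissible (G : RibbonGraph) (k : ℕ) (hk : 0 < k) :
    (k : RatFunc ℚ) ^ G.cCount * RatFunc.X ^ G.rank *
        G.BR (((k : RatFunc ℚ) + RatFunc.X) / RatFunc.X) (RatFunc.X * (k : RatFunc ℚ))
          ((k : RatFunc ℚ))⁻¹ =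
      ∑ φ ∈ G.kvalsR k,
        (RatFunc.X + 1) ^ G.totalCount φ.1 * RatFunc.X ^ G.whiteCount φ.1 := by
  classical
  have hk0 : (k : RatFunc ℚ) ≠ 0 := by
    have h1 : (k : Polynomial ℚ) ≠ 0 := Nat.cast_ne_zero.mpr hk.ne'
    have h2 := RatFunc.algebraMap_ne_zero h1
    rwa [map_natCast] at h2
  have hX0 : (RatFunc.X : RatFunc ℚ) ≠ 0 := RatFunc.X_ne_zero
  rw [RibbonGraph.rhs_eq k]
  unfold RibbonGraph.BR
  rw [Finset.mul_sum]
  refine Finset.sum_congr rfl fun A _ => ?_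
  have hxm1 : ((k : RatFunc ℚ) + RatFunc.X) / RatFunc.X - 1 = (k : RatFunc ℚ) / RatFunc.X := by
    rw [div_sub_one hX0, add_sub_cancel_right]
  rw [hxm1]
  have hcv := G.cSub_le_vCount A
  have hcc := G.cCount_le_cSub A
  have hccv := G.cCount_le_vCount
  have hnv := RibbonGraph.vCount_le_card_add_cSub (G := G) A
  have hgen := RibbonGraph.genus_nonneg (G := G) A
  have h1 : G.cCount + (G.rank - G.rankSub A) + G.nullSub A = G.fSub A + G.genusSub A := by
    unfold RibbonGraph.rank RibbonGraph.rankSub RibbonGraph.nullSub RibbonGraph.genusSub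
      RibbonGraph.cCount at *
    omega
  have h2 : G.rank + G.nullSub A = A.card + (G.rank - G.rankSub A) := by
    unfold RibbonGraph.rank RibbonGraph.rankSub RibbonGraph.nullSub RibbonGraph.cCount at *
    omega
  exact pow_identity hk0 hX0 _ _ _ _ _ _ _ h1 h2
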